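/- arXiv:1211.2085 — 2 statements merged into one kernel-verified Lean document; each statement's English description precedes it below -/
import Mathlib

section
/- Let (Y_t)_{t≥1} be a sequence of centered Gaussian real random variables with Var(Y_t) ≤ q(ε)σ² for all t, where σ² > 0 and q(ε) → 0 as ε → 0, and let τ = min{t ≥ 1 : |Y_t| ≥ 1}. Then liminf_{ε→0} q(ε) log E[τ] ≥ 1/(2σ²). -/
open MeasureTheory ProbabilityTheory Filter
open scoped ENNReal

open Real Set
open scoped NNReal

lemma myintegral_exp_neg_mul_Ioi {b : ℝ} (hb : 0 < b) (a : ℝ) :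
    ∫ x in Set.Ioi a, Real.exp (-(b * x)) = Real.exp (-(b * a)) / b := by
  have h := integral_Ioi_of_hasDerivAt_of_tendsto' (a := a) (m := 0)
    (f := fun x => -Real.exp (-(b * x)) / b) (f' := fun x => Real.exp (-(b * x)))
    (fun x _ => by
      have : HasDerivAt (fun x : ℝ => -Real.exp (-(b * x)) / b)
          (-(Real.exp (-(b * id x)) * -(b * 1)) / b) x :=
        ((((hasDerivAt_id x).const_mul b).neg.exp).neg).div_const b
      refine this.congr_deriv ?_
      simp only [id]
      field_simp)
    (by simpa [neg_mul] using exp_neg_integrableOn_Ioi a hb)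
    (by
      have h1 : Tendsto (fun x : ℝ => -(b * x)) atTop atBot :=
        tendsto_neg_atTop_atBot.comp (tendsto_const_mul_atTop_of_pos hb |>.mpr tendsto_id)
      have h2 : Tendsto (fun x : ℝ => -Real.exp (-(b * x)) / b) atTop (nhds (-0 / b)) :=
        ((tendsto_exp_atBot.comp h1).neg).div_const b
      simpa using h2)
  rw [h]
  field_simp
  ring

lemma my_gaussian_Ici {v : ℝ≥0} (hv0 : v ≠ 0) {V : ℝ} (hv : (v : ℝ) ≤ V) (hV : 0 < V)
    (hV1 : V ≤ 1) :
    gaussianReal 0 v (Set.Ici 1) ≤ ENNReal.ofReal (Real.exp (-(1 / (2 * V)))) := by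
  have hvpos : (0 : ℝ) < v := lt_of_le_of_ne (v.2) (by exact_mod_cast (Ne.symm hv0))
  have h2v : (0 : ℝ) < 2 * v := by linarith
  set C : ℝ := (Real.sqrt (2 * π * v))⁻¹ with hC
  have hsqrtpos : (0 : ℝ) < Real.sqrt (2 * π * v) := by
    apply Real.sqrt_pos.mpr; positivity
  have hbpos : (0 : ℝ) < (v : ℝ)⁻¹ := by positivity
  set K : ℝ := C * Real.exp (1 / (2 * v)) with hK
  rw [gaussianReal_apply_eq_integral _ hv0]
  apply ENNReal.ofReal_le_ofReal
  have hgint0 : IntegrableOn (fun x : ℝ => Real.exp (-((v : ℝ)⁻¹ * x))) (Set.Ioi 1) := by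
    simpa [neg_mul] using exp_neg_integrableOn_Ioi 1 hbpos
  have hgint : IntegrableOn (fun x : ℝ => K * Real.exp (-((v : ℝ)⁻¹ * x))) (Set.Ici 1) := by
    rw [integrableOn_Ici_iff_integrableOn_Ioi]
    exact hgint0.const_mul K
  have hpt : ∀ x : ℝ, gaussianPDFReal 0 v x ≤ K * Real.exp (-((v : ℝ)⁻¹ * x)) := by
    intro x
    have hrhs : K * Real.exp (-((v : ℝ)⁻¹ * x))
        = C * Real.exp (1 / (2 * (v : ℝ)) + -((v : ℝ)⁻¹ * x)) := by
      rw [hK, mul_assoc, ← Real.exp_add]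
    rw [gaussianPDFReal, hrhs]
    apply mul_le_mul_of_nonneg_left _ (by positivity)
    apply Real.exp_le_exp.mpr
    have heq : 1 / (2 * (v : ℝ)) + -((v : ℝ)⁻¹ * x) = (1 - 2 * x) / (2 * v) := by
      field_simp; ring
    rw [heq, sub_zero, div_le_div_iff_of_pos_right h2v]
    nlinarith [sq_nonneg (x - 1)]
  have step1 : ∫ x in Set.Ici 1, gaussianPDFReal 0 v x
      ≤ ∫ x in Set.Ici 1, K * Real.exp (-((v : ℝ)⁻¹ * x)) :=
    setIntegral_mono_on (integrable_gaussianPDFReal 0 v).integrableOn hgint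
      measurableSet_Ici (fun x _ => hpt x)
  have step2 : ∫ x in Set.Ici 1, K * Real.exp (-((v : ℝ)⁻¹ * x))
      = K * ((Real.exp (-(v : ℝ)⁻¹)) * v) := by
    rw [MeasureTheory.integral_const_mul, MeasureTheory.integral_Ici_eq_integral_Ioi,
      myintegral_exp_neg_mul_Ioi hbpos]
    rw [mul_one, div_inv_eq_mul]
  refine step1.trans ?_
  rw [step2, hK, hC]
  have hsum : Real.exp (1 / (2 * (v : ℝ))) * Real.exp (-(v : ℝ)⁻¹)
      = Real.exp (-(1 / (2 * (v : ℝ)))) := by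
    rw [← Real.exp_add]
    congr 1
    field_simp
    ring
  have hval : (Real.sqrt (2 * π * v))⁻¹ * Real.exp (1 / (2 * v)) *
      (Real.exp (-(v : ℝ)⁻¹) * v)
      = ((Real.sqrt (2 * π * v))⁻¹ * v) * Real.exp (-(1 / (2 * v))) := by
    rw [← hsum]; ring
  rw [hval]
  have hc1 : (Real.sqrt (2 * π * v))⁻¹ * v ≤ 1 := by
    rw [inv_mul_le_iff₀ hsqrtpos, mul_one]
    have : (v : ℝ) = Real.sqrt ((v : ℝ) ^ 2) := by
      rw [Real.sqrt_sq hvpos.le]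
    rw [this]
    apply Real.sqrt_le_sqrt
    nlinarith [Real.pi_gt_three]
  have hc2 : Real.exp (-(1 / (2 * (v : ℝ)))) ≤ Real.exp (-(1 / (2 * V))) := by
    apply Real.exp_le_exp.mpr
    have : 1 / (2 * V) ≤ 1 / (2 * (v : ℝ)) := by
      apply one_div_le_one_div_of_le h2v; linarith
    linarith
  calc (Real.sqrt (2 * π * v))⁻¹ * v * Real.exp (-(1 / (2 * v)))
      ≤ 1 * Real.exp (-(1 / (2 * V))) := by
        apply mul_le_mul hc1 hc2 (by positivity) (by norm_num)
    _ = Real.exp (-(1 / (2 * V))) := one_mul _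

lemma my_gaussian_tail {v : ℝ≥0} {V : ℝ} (hv : (v : ℝ) ≤ V) (hV : 0 < V) (hV1 : V ≤ 1) :
    gaussianReal 0 v {x : ℝ | 1 ≤ |x|} ≤ ENNReal.ofReal (2 * Real.exp (-(1 / (2 * V)))) := by
  have hSm : MeasurableSet {x : ℝ | 1 ≤ |x|} :=
    measurableSet_le measurable_const measurable_abs
  by_cases hv0 : v = 0
  · subst hv0
    rw [gaussianReal_zero_var, Measure.dirac_apply' _ hSm]
    simp only [Set.indicator_apply, Set.mem_setOf_eq, abs_zero]
    norm_num
  · have hsub : {x : ℝ | 1 ≤ |x|} ⊆ Set.Ici 1 ∪ Set.Iic (-1) := by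
      intro x hx
      have hx' : 1 ≤ |x| := hx
      rcases le_abs.mp hx' with h | h
      · exact Or.inl h
      · exact Or.inr (by simp only [Set.mem_Iic]; linarith)
    have hIic : gaussianReal 0 v (Set.Iic (-1)) = gaussianReal 0 v (Set.Ici 1) := by
      have hmap : (gaussianReal 0 v).map (fun x : ℝ => -x) = gaussianReal 0 v := by
        have := gaussianReal_map_const_mul (μ := 0) (v := v) (-1)
        simpa [neg_one_mul, show (⟨(-1 : ℝ)^2, sq_nonneg _⟩ : ℝ≥0) = 1 by ext; norm_num]
          using this
      calc gaussianReal 0 v (Set.Iic (-1))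
          = (gaussianReal 0 v).map (fun x : ℝ => -x) (Set.Ici 1) := by
            rw [Measure.map_apply measurable_neg measurableSet_Ici]
            congr 1
            ext x
            simp
        _ = gaussianReal 0 v (Set.Ici 1) := by rw [hmap]
    calc gaussianReal 0 v {x : ℝ | 1 ≤ |x|}
        ≤ gaussianReal 0 v (Set.Ici 1 ∪ Set.Iic (-1)) := measure_mono hsub
      _ ≤ gaussianReal 0 v (Set.Ici 1) + gaussianReal 0 v (Set.Iic (-1)) := measure_union_le _ _
      _ ≤ ENNReal.ofReal (Real.exp (-(1 / (2 * V)))) + ENNReal.ofReal (Real.exp (-(1 / (2 * V)))) := by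
          rw [hIic]
          exact add_le_add (my_gaussian_Ici hv0 hv hV hV1) (my_gaussian_Ici hv0 hv hV hV1)
      _ = ENNReal.ofReal (2 * Real.exp (-(1 / (2 * V)))) := by
          rw [← ENNReal.ofReal_add (by positivity) (by positivity)]
          ring_nf

/-- If, for each `ε > 0`, `(Y ε t)_{t ≥ 1}` is a sequence of centered Gaussian real random
variables with variance at most `q ε * σ2` (`σ2 > 0`, `q ε → 0` as `ε → 0+`), and
`τ ε = min {t ≥ 1 : |Y ε t| ≥ 1}`, then `liminf_{ε → 0} q ε * log E[τ ε] ≥ 1 / (2 * σ2)`. -/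
theorem stmt4 {Ω : Type*} [MeasurableSpace Ω] (P : ℝ → Measure Ω)
    (hP : ∀ ε : ℝ, 0 < ε → IsProbabilityMeasure (P ε))
    (Y : ℝ → ℕ → Ω → ℝ) (σ2 : ℝ) (hσ2 : 0 < σ2)
    (q : ℝ → ℝ) (hq : ∀ ε : ℝ, 0 < ε → 0 < q ε)
    (hq0 : Filter.Tendsto q (nhdsWithin 0 (Set.Ioi 0)) (nhds 0))
    (hY : ∀ ε : ℝ, 0 < ε → ∀ t : ℕ, 1 ≤ t →
      ∃ vt : NNReal, (vt : ℝ) ≤ q ε * σ2 ∧ (P ε).map (Y ε t) = gaussianReal 0 vt)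
    (τ : ℝ → Ω → ℕ∞)
    (hτ : ∀ ε : ℝ, 0 < ε → ∀ ω,
      τ ε ω = sInf {s : ℕ∞ | ∃ t : ℕ, s = t ∧ 1 ≤ t ∧ 1 ≤ |Y ε t ω|}) :
    ((1 / (2 * σ2) : ℝ) : EReal) ≤
      Filter.liminf
        (fun ε : ℝ => ((q ε : ℝ) : EReal) * ENNReal.log (∫⁻ ω, (τ ε ω : ℝ≥0∞) ∂(P ε)))
        (nhdsWithin 0 (Set.Ioi 0)) := by
  set l := nhdsWithin (0 : ℝ) (Set.Ioi 0) with hl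
  -- eventual key bound
  have hev : ∀ᶠ ε in l, ((1 / (2 * σ2) - q ε * Real.log 8 : ℝ) : EReal) ≤
      (q ε : EReal) * ENNReal.log (∫⁻ ω, (τ ε ω : ℝ≥0∞) ∂(P ε)) := by
    have h1 : ∀ᶠ ε in l, q ε * σ2 ≤ 1 := by
      have := hq0.eventually (eventually_le_nhds (show (0:ℝ) < 1/σ2 by positivity))
      filter_upwards [this] with ε hε
      rw [← le_div_iff₀ hσ2]
      exact hε
    filter_upwards [h1, self_mem_nhdsWithin] with ε hV1 hε
    have hε : (0 : ℝ) < ε := hε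
    haveI := hP ε hε
    have hqpos := hq ε hε
    set V : ℝ := q ε * σ2 with hVdef
    have hVpos : 0 < V := by positivity
    set c : ℝ := 1 / (2 * V) with hc
    have hcpos : 0 < c := by positivity
    set E := ∫⁻ ω, (τ ε ω : ℝ≥0∞) ∂(P ε) with hE
    -- Claim : ofReal (exp c / 8) ≤ E
    have claim : ENNReal.ofReal (Real.exp c / 8) ≤ E := by
      set n : ℕ := ⌊Real.exp c / 4⌋₊ with hn
      -- auxiliary measurable versions with tail bound
      have h' : ∀ t : ℕ, ∃ Z : Ω → ℝ, Measurable Z ∧ (1 ≤ t →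
          (Y ε t =ᵐ[P ε] Z ∧
            P ε {ω | 1 ≤ |Z ω|} ≤ ENNReal.ofReal (2 * Real.exp (-c)))) := by
        intro t
        by_cases ht : 1 ≤ t
        · obtain ⟨vt, hvt, hmap⟩ := hY ε hε t ht
          have hae : AEMeasurable (Y ε t) (P ε) := by
            by_contra hna
            rw [Measure.map_of_not_aemeasurable hna] at hmap
            have h1 : (gaussianReal 0 vt) Set.univ = 1 := measure_univ
            rw [← hmap] at h1
            simp at h1
          refine ⟨hae.mk _, hae.measurable_mk, fun _ => ⟨hae.ae_eq_mk, ?_⟩⟩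
          have hSm : MeasurableSet {x : ℝ | 1 ≤ |x|} :=
            measurableSet_le measurable_const measurable_abs
          have : P ε {ω | 1 ≤ |hae.mk (Y ε t) ω|}
              = gaussianReal 0 vt {x : ℝ | 1 ≤ |x|} := by
            rw [← hmap, Measure.map_congr hae.ae_eq_mk,
              Measure.map_apply hae.measurable_mk hSm]
            rfl
          rw [this]
          have hneg : -(1 / (2 * V)) = -c := by rw [hc]
          calc gaussianReal 0 vt {x : ℝ | 1 ≤ |x|}
              ≤ ENNReal.ofReal (2 * Real.exp (-(1 / (2 * V)))) :=
                my_gaussian_tail hvt hVpos hV1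
            _ = ENNReal.ofReal (2 * Real.exp (-c)) := by rw [hneg]
        · exact ⟨fun _ => 0, measurable_const, fun h => absurd h ht⟩
      choose Z hZm hZp using h'
      set A : Set Ω := ⋂ t ∈ Finset.Icc 1 n, {ω | |Z t ω| < 1} with hA
      have hAm : MeasurableSet A := by
        apply MeasurableSet.biInter (Finset.Icc 1 n : Finset ℕ).countable_toSet
        intro t _
        exact measurableSet_lt (Measurable.abs (hZm t)) measurable_const
      -- a.e. equality on the relevant indices
      have haeq : ∀ᵐ ω ∂(P ε), ∀ t : ℕ, 1 ≤ t → Y ε t ω = Z t ω := by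
        rw [ae_all_iff]
        intro t
        by_cases ht : 1 ≤ t
        · filter_upwards [(hZp t ht).1] with ω hω _
          exact hω
        · exact Filter.Eventually.of_forall (fun ω h => absurd h ht)
      -- pointwise lower bound of τ by indicator
      have hbound : ∀ᵐ ω ∂(P ε),
          A.indicator (fun _ => ((n : ℝ≥0∞) + 1)) ω ≤ (τ ε ω : ℝ≥0∞) := by
        filter_upwards [haeq] with ω hω
        by_cases hωA : ω ∈ A
        · rw [Set.indicator_of_mem hωA]
          have h1 : ((n + 1 : ℕ) : ℕ∞) ≤ τ ε ω := by
            rw [hτ ε hε ω]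
            apply le_sInf
            rintro s ⟨t, rfl, ht1, htY⟩
            have htn : n < t := by
              by_contra hcon
              push_neg at hcon
              have hmem : t ∈ Finset.Icc 1 n := Finset.mem_Icc.mpr ⟨ht1, hcon⟩
              have := Set.mem_iInter₂.mp hωA t hmem
              rw [hω t ht1] at htY
              exact absurd htY (not_le.mpr this)
            exact_mod_cast Nat.cast_le.mpr (Nat.succ_le_of_lt htn)
          have h2 : (((n + 1 : ℕ) : ℕ∞) : ℝ≥0∞) ≤ ((τ ε ω : ℕ∞) : ℝ≥0∞) :=
            ENat.toENNReal_le.mpr h1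
          rw [ENat.toENNReal_coe] at h2
          push_cast at h2
          exact h2
        · rw [Set.indicator_of_notMem hωA]
          exact zero_le
      -- compare integrals
      have hE635 : ((n : ℝ≥0∞) + 1) * P ε A ≤ E := by
        rw [hE, ← lintegral_indicator_const hAm ((n : ℝ≥0∞) + 1)]
        exact lintegral_mono_ae hbound
      -- bound P ε Aᶜ
      have hcompl : P ε Aᶜ ≤ ENNReal.ofReal (1 / 2) := by
        have hsub : Aᶜ ⊆ ⋃ t ∈ Finset.Icc 1 n, {ω | 1 ≤ |Z t ω|} := by
          rw [hA, Set.compl_iInter₂]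
          apply Set.iUnion₂_mono
          intro t _ ω hω
          simp only [Set.mem_compl_iff, Set.mem_setOf_eq, not_lt] at hω
          exact hω
        calc P ε Aᶜ ≤ P ε (⋃ t ∈ Finset.Icc 1 n, {ω | 1 ≤ |Z t ω|}) := measure_mono hsub
          _ ≤ ∑ t ∈ Finset.Icc 1 n, P ε {ω | 1 ≤ |Z t ω|} := measure_biUnion_finset_le _ _
          _ ≤ ∑ t ∈ Finset.Icc 1 n, ENNReal.ofReal (2 * Real.exp (-c)) := by
              apply Finset.sum_le_sum
              intro t ht
              exact (hZp t (Finset.mem_Icc.mp ht).1).2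
          _ = (n : ℝ≥0∞) * ENNReal.ofReal (2 * Real.exp (-c)) := by
              rw [Finset.sum_const, Nat.card_Icc]
              simp [nsmul_eq_mul]
          _ ≤ ENNReal.ofReal (1 / 2) := by
              rw [← ENNReal.ofReal_natCast, ← ENNReal.ofReal_mul (by positivity)]
              apply ENNReal.ofReal_le_ofReal
              have hfl : (n : ℝ) ≤ Real.exp c / 4 := Nat.floor_le (by positivity)
              have hexp : Real.exp c * Real.exp (-c) = 1 := by
                rw [← Real.exp_add]; simp
              nlinarith [Real.exp_pos (-c), Real.exp_pos c]
        -- lower bound for P ε A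
      have hPA : ENNReal.ofReal (1 / 2) ≤ P ε A := by
        have h1 : P ε A = 1 - P ε Aᶜ := by
          have h2 := measure_compl hAm (measure_ne_top (P ε) A)
          rw [measure_univ] at h2
          rw [h2, ENNReal.sub_sub_cancel ENNReal.one_ne_top prob_le_one]
        rw [h1]
        calc ENNReal.ofReal (1 / 2) = 1 - ENNReal.ofReal (1 / 2) := by
              rw [← ENNReal.ofReal_one, ← ENNReal.ofReal_sub _ (by norm_num)]
              norm_num
          _ ≤ 1 - P ε Aᶜ := tsub_le_tsub_left hcompl 1
      -- put together
      calc ENNReal.ofReal (Real.exp c / 8)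
          = ENNReal.ofReal (Real.exp c / 4) * ENNReal.ofReal (1 / 2) := by
            rw [← ENNReal.ofReal_mul (by positivity)]
            congr 1
            ring
        _ ≤ ((n : ℝ≥0∞) + 1) * P ε A := by
            apply mul_le_mul' _ hPA
            calc ENNReal.ofReal (Real.exp c / 4) ≤ ENNReal.ofReal ((n : ℝ) + 1) := by
                  apply ENNReal.ofReal_le_ofReal
                  exact (Nat.lt_floor_add_one _).le
              _ = (n : ℝ≥0∞) + 1 := by
                  rw [show ((n : ℝ) + 1) = ((n + 1 : ℕ) : ℝ) by push_cast; ring,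
                    ENNReal.ofReal_natCast]
                  push_cast
                  ring
        _ ≤ E := hE635
    -- from the claim to the log bound
    have hlog : ((c - Real.log 8 : ℝ) : EReal) ≤ ENNReal.log E := by
      have h1 : ENNReal.log (ENNReal.ofReal (Real.exp c / 8)) ≤ ENNReal.log E :=
        ENNReal.log_monotone claim
      rwa [ENNReal.log_ofReal_of_pos (by positivity),
        Real.log_div (Real.exp_ne_zero _) (by norm_num), Real.log_exp] at h1
    have hqc : q ε * c = 1 / (2 * σ2) := by
      rw [hc, hVdef]
      field_simp
    set L := ENNReal.log E with hLdef
    rcases eq_bot_or_bot_lt L with hLb | hLb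
    · rw [hLb] at hlog
      exact absurd (le_bot_iff.mp hlog) (EReal.coe_ne_bot _)
    rcases eq_top_or_lt_top L with hLt | hLt
    · rw [hLt, EReal.coe_mul_top_of_pos hqpos]
      exact le_top
    · have hLr : L = ((L.toReal : ℝ) : EReal) := (EReal.coe_toReal hLt.ne hLb.ne').symm
      rw [hLr] at hlog ⊢
      rw [← EReal.coe_mul]
      apply EReal.coe_le_coe_iff.mpr
      have hr : c - Real.log 8 ≤ L.toReal := EReal.coe_le_coe_iff.mp hlog
      nlinarith [mul_le_mul_of_nonneg_left hr hqpos.le]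
  -- conclude via liminf comparison
  have hlim : Tendsto (fun ε => ((1 / (2 * σ2) - q ε * Real.log 8 : ℝ) : EReal)) l
      (nhds (((1 / (2 * σ2) : ℝ)) : EReal)) := by
    apply EReal.tendsto_coe.mpr
    have h2 : Tendsto (fun ε => 1 / (2 * σ2) - q ε * Real.log 8) l
        (nhds (1 / (2 * σ2) - 0 * Real.log 8)) :=
      tendsto_const_nhds.sub (hq0.mul_const _)
    simpa using h2
  calc ((1 / (2 * σ2) : ℝ) : EReal)
      = Filter.liminf (fun ε => ((1 / (2 * σ2) - q ε * Real.log 8 : ℝ) : EReal)) l :=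
        (hlim.liminf_eq).symm
    _ ≤ Filter.liminf
        (fun ε : ℝ => ((q ε : ℝ) : EReal) * ENNReal.log (∫⁻ ω, (τ ε ω : ℝ≥0∞) ∂(P ε))) l :=
        liminf_le_liminf hev
end

section
/- Let A be a real d×d matrix, c ∈ ℝ^d with c^T Σ_N c ≠ 0 where Σ_N = Σ_{i=0}^{N-1} A^i(A^T)^i. Then the infimum of (1/2)Σ_{t=1}^N ‖y_t - A y_{t-1}‖² over all sequences y_0 = 0, y_1, ..., y_N ∈ ℝ^d with |c^T y_N| ≥ 1 equals 1/(2 c^T Σ_N c), and it is attained by y_t = K Σ_t (A^{N-t})^T c with K = 1/|c^T Σ_N c|. -/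
open Matrix

lemma key_aux {d : ℕ} (A : Matrix (Fin d) (Fin d) ℝ) (c : Fin d → ℝ) (i : ℕ) :
    c ⬝ᵥ (A ^ i * (Aᵀ) ^ i) *ᵥ c = ∑ j, (((A ^ i)ᵀ *ᵥ c) j) ^ 2 := by
  rw [← mulVec_mulVec, dotProduct_mulVec, ← mulVec_transpose, transpose_pow]
  simp [dotProduct, sq]

lemma dot_mulVec_aux {d : ℕ} (c : Fin d → ℝ) (M : Matrix (Fin d) (Fin d) ℝ) (v : Fin d → ℝ) :
    c ⬝ᵥ M *ᵥ v = (Mᵀ *ᵥ c) ⬝ᵥ v := by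
  rw [dotProduct_mulVec, ← mulVec_transpose]

lemma sum_mulVec_aux {d : ℕ} (s : Finset ℕ) (M : ℕ → Matrix (Fin d) (Fin d) ℝ) (v : Fin d → ℝ) :
    (∑ i ∈ s, M i) *ᵥ v = ∑ i ∈ s, (M i) *ᵥ v := by
  ext j
  simp [mulVec, dotProduct, Matrix.sum_apply, Finset.sum_apply, Finset.sum_mul]
  rw [Finset.sum_comm]

lemma dot_sum_aux {d : ℕ} (s : Finset ℕ) (c : Fin d → ℝ) (v : ℕ → Fin d → ℝ) :
    c ⬝ᵥ (∑ i ∈ s, v i) = ∑ i ∈ s, c ⬝ᵥ v i := by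
  simp [dotProduct, Finset.mul_sum, Finset.sum_apply]
  rw [Finset.sum_comm]

/-- With `Σ t = ∑_{i=0}^{t-1} A^i (Aᵀ)^i` and `cᵀ Σ N c ≠ 0`, the infimum of
`(1/2) ∑_{t=1}^N ‖y t - A y (t-1)‖²` over sequences with `y 0 = 0` and `|cᵀ y N| ≥ 1`
equals `1 / (2 cᵀ Σ N c)`, and it is attained by `y t = K • Σ t (A^(N-t))ᵀ c` with
`K = 1 / |cᵀ Σ N c|`. -/
theorem stmt8 {d : ℕ} (A : Matrix (Fin d) (Fin d) ℝ) (c : Fin d → ℝ)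
    (N : ℕ) (hN : 1 ≤ N)
    (S : ℕ → Matrix (Fin d) (Fin d) ℝ)
    (hS : ∀ t, S t = ∑ i ∈ Finset.range t, A ^ i * (Aᵀ) ^ i)
    (hc : c ⬝ᵥ (S N).mulVec c ≠ 0)
    (K : ℝ) (hK : K = 1 / |c ⬝ᵥ (S N).mulVec c|)
    (ystar : ℕ → Fin d → ℝ)
    (hystar : ∀ t, ystar t = K • (S t).mulVec ((A ^ (N - t))ᵀ.mulVec c)) :
    sInf {r : ℝ | ∃ y : ℕ → Fin d → ℝ, y 0 = 0 ∧ 1 ≤ |c ⬝ᵥ y N| ∧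
        r = (1 / 2) * ∑ t ∈ Finset.Icc 1 N, ∑ i, (y t i - A.mulVec (y (t - 1)) i) ^ 2} =
      1 / (2 * (c ⬝ᵥ (S N).mulVec c)) ∧
    ystar 0 = 0 ∧ 1 ≤ |c ⬝ᵥ ystar N| ∧
    (1 / 2) * ∑ t ∈ Finset.Icc 1 N, ∑ i, (ystar t i - A.mulVec (ystar (t - 1)) i) ^ 2 =
      1 / (2 * (c ⬝ᵥ (S N).mulVec c)) := by
  set q : ℝ := c ⬝ᵥ (S N).mulVec c with hqdef
  have hqsum : q = ∑ i ∈ Finset.range N, ∑ j, (((A ^ i)ᵀ *ᵥ c) j) ^ 2 := by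
    rw [hqdef, hS, sum_mulVec_aux, dot_sum_aux]
    exact Finset.sum_congr rfl fun i _ => key_aux A c i
  have hqpos : 0 < q := by
    rcases lt_or_eq_of_le (by rw [hqsum]; positivity : (0:ℝ) ≤ q) with h | h
    · exact h
    · exact absurd h.symm hc
  have hKq : K = 1 / q := by rw [hK, abs_of_pos hqpos]
  -- ystar basic facts
  have hy0 : ystar 0 = 0 := by
    rw [hystar 0, hS 0]; simp
  have hyN : c ⬝ᵥ ystar N = 1 := by
    rw [hystar N, Nat.sub_self, pow_zero, transpose_one, one_mulVec,
      dotProduct_smul, smul_eq_mul, ← hqdef, hKq]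
    field_simp
  -- recursion for S
  have hSrec : ∀ k, S (k + 1) = A * S k * Aᵀ + 1 := by
    intro k
    rw [hS (k + 1), hS k, Finset.sum_range_succ']
    congr 1
    · rw [Finset.mul_sum, Finset.sum_mul]
      refine Finset.sum_congr rfl fun i _ => ?_
      rw [pow_succ', pow_succ]
      simp only [mul_assoc]
    · simp
  -- the optimal increments
  have hdelta : ∀ k : ℕ, k + 1 ≤ N →
      ystar (k + 1) = A *ᵥ (ystar k) + K • ((A ^ (N - (k + 1)))ᵀ *ᵥ c) := by
    intro k hk
    have hexp : N - (k + 1) + 1 = N - k := by omega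
    have hA : Aᵀ *ᵥ ((A ^ (N - (k + 1)))ᵀ *ᵥ c) = (A ^ (N - k))ᵀ *ᵥ c := by
      rw [mulVec_mulVec, ← transpose_mul, ← pow_succ, hexp]
    rw [hystar (k + 1), hystar k, hSrec k, add_mulVec, one_mulVec,
      ← mulVec_mulVec, ← mulVec_mulVec, hA, smul_add]
    congr 1
    rw [← mulVec_smul]
  have hdelta' : ∀ t ∈ Finset.Icc 1 N, ∀ i,
      ystar t i - A.mulVec (ystar (t - 1)) i = K * (((A ^ (N - t))ᵀ *ᵥ c) i) := by
    intro t ht i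
    rw [Finset.mem_Icc] at ht
    obtain ⟨k, rfl⟩ : ∃ k, t = k + 1 := ⟨t - 1, by omega⟩
    rw [Nat.add_sub_cancel, hdelta k ht.2]
    simp only [Pi.add_apply, Pi.smul_apply, smul_eq_mul, add_sub_cancel_left, mulVec]
  -- reflected sums
  have hreflect : ∑ k ∈ Finset.range N, ∑ i, (((A ^ (N - 1 - k))ᵀ *ᵥ c) i) ^ 2 = q := by
    have hr := Finset.sum_range_reflect (fun m => ∑ i, (((A ^ m)ᵀ *ᵥ c) i) ^ 2) N
    rw [hr, ← hqsum]
  -- cost of ystar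
  have hcost : (1 / 2) * ∑ t ∈ Finset.Icc 1 N, ∑ i, (ystar t i - A.mulVec (ystar (t - 1)) i) ^ 2
      = 1 / (2 * q) := by
    have e1 : ∑ t ∈ Finset.Icc 1 N, ∑ i, (ystar t i - A.mulVec (ystar (t - 1)) i) ^ 2
        = K ^ 2 * ∑ t ∈ Finset.Icc 1 N, ∑ i, (((A ^ (N - t))ᵀ *ᵥ c) i) ^ 2 := by
      rw [Finset.mul_sum]
      refine Finset.sum_congr rfl fun t ht => ?_
      rw [Finset.mul_sum]
      refine Finset.sum_congr rfl fun i _ => ?_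
      rw [hdelta' t ht i, mul_pow]
    have e2 : ∑ t ∈ Finset.Icc 1 N, ∑ i, (((A ^ (N - t))ᵀ *ᵥ c) i) ^ 2 = q := by
      rw [← Finset.Ico_add_one_right_eq_Icc, Finset.sum_Ico_eq_sum_range]
      simp only [Nat.add_sub_cancel]
      have e3 : ∀ k ∈ Finset.range N, ∑ i, (((A ^ (N - (1 + k)))ᵀ *ᵥ c) i) ^ 2
          = ∑ i, (((A ^ (N - 1 - k))ᵀ *ᵥ c) i) ^ 2 := by
        intro k _
        rw [show N - (1 + k) = N - 1 - k from by omega]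
      rw [Finset.sum_congr rfl e3, hreflect]
    rw [e1, e2, hKq]
    field_simp
  -- lower bound
  have lb : ∀ r ∈ {r : ℝ | ∃ y : ℕ → Fin d → ℝ, y 0 = 0 ∧ 1 ≤ |c ⬝ᵥ y N| ∧
      r = (1 / 2) * ∑ t ∈ Finset.Icc 1 N, ∑ i, (y t i - A.mulVec (y (t - 1)) i) ^ 2},
      1 / (2 * q) ≤ r := by
    rintro r ⟨y, h0, h1, rfl⟩
    have tel : c ⬝ᵥ y N = ∑ i ∈ Finset.range N,
        ((A ^ (N - 1 - i))ᵀ *ᵥ c) ⬝ᵥ (fun j => y (i + 1) j - A.mulVec (y i) j) := by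
      have h := Finset.sum_range_sub (fun t => c ⬝ᵥ (A ^ (N - t)) *ᵥ (y t)) N
      simp only [Nat.sub_self, pow_zero, one_mulVec, h0, mulVec_zero, dotProduct_zero,
        sub_zero] at h
      rw [← h]
      refine Finset.sum_congr rfl fun i hi => ?_
      have hiN : i < N := Finset.mem_range.mp hi
      have hp : A ^ (N - i) = A ^ (N - 1 - i) * A := by
        rw [← pow_succ]
        congr 1
        omega
      have hq2 : N - (i + 1) = N - 1 - i := by omega
      simp only [hq2, hp, ← mulVec_mulVec]
      rw [dot_mulVec_aux, dot_mulVec_aux]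
      simp [dotProduct, mul_sub, Finset.sum_sub_distrib, mulVec]
    have CS : (c ⬝ᵥ y N) ^ 2 ≤
        q * (∑ i ∈ Finset.range N, ∑ j, (y (i + 1) j - A.mulVec (y i) j) ^ 2) := by
      have h := Finset.sum_mul_sq_le_sq_mul_sq
        ((Finset.range N) ×ˢ (Finset.univ : Finset (Fin d)))
        (fun p => ((A ^ (N - 1 - p.1))ᵀ *ᵥ c) p.2)
        (fun p => y (p.1 + 1) p.2 - A.mulVec (y p.1) p.2)
      simp only [Finset.sum_product] at h
      rw [tel]
      calc (∑ i ∈ Finset.range N,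
            ((A ^ (N - 1 - i))ᵀ *ᵥ c) ⬝ᵥ (fun j => y (i + 1) j - A.mulVec (y i) j)) ^ 2
          = (∑ i ∈ Finset.range N,
            ∑ j, ((A ^ (N - 1 - i))ᵀ *ᵥ c) j * (y (i + 1) j - A.mulVec (y i) j)) ^ 2 := rfl
        _ ≤ (∑ i ∈ Finset.range N, ∑ j, (((A ^ (N - 1 - i))ᵀ *ᵥ c) j) ^ 2)
            * (∑ i ∈ Finset.range N, ∑ j, (y (i + 1) j - A.mulVec (y i) j) ^ 2) := h
        _ = q * _ := by rw [hreflect]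
    have hDsum : ∑ t ∈ Finset.Icc 1 N, ∑ i, (y t i - A.mulVec (y (t - 1)) i) ^ 2
        = ∑ i ∈ Finset.range N, ∑ j, (y (i + 1) j - A.mulVec (y i) j) ^ 2 := by
      rw [← Finset.Ico_add_one_right_eq_Icc, Finset.sum_Ico_eq_sum_range]
      simp only [Nat.add_sub_cancel]
      refine Finset.sum_congr rfl fun k _ => ?_
      rw [show 1 + k = k + 1 from by omega, Nat.add_sub_cancel]
    rw [hDsum]
    set D : ℝ := ∑ i ∈ Finset.range N, ∑ j, (y (i + 1) j - A.mulVec (y i) j) ^ 2 with hD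
    have h1sq : 1 ≤ (c ⬝ᵥ y N) ^ 2 := by
      have := sq_abs (c ⬝ᵥ y N)
      nlinarith
    have hDq : 1 ≤ q * D := le_trans h1sq CS
    rw [div_le_iff₀ (by positivity)]
    nlinarith
  -- membership
  have mem : (1 / (2 * q)) ∈ {r : ℝ | ∃ y : ℕ → Fin d → ℝ, y 0 = 0 ∧ 1 ≤ |c ⬝ᵥ y N| ∧
      r = (1 / 2) * ∑ t ∈ Finset.Icc 1 N, ∑ i, (y t i - A.mulVec (y (t - 1)) i) ^ 2} :=
    ⟨ystar, hy0, by rw [hyN]; norm_num, hcost.symm⟩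
  exact ⟨le_antisymm (csInf_le ⟨1 / (2 * q), lb⟩ mem) (le_csInf ⟨_, mem⟩ lb),
    hy0, by rw [hyN]; norm_num, hcost⟩
end
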